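/- With π(y) = π_ref(y)·exp(r(y)/β)/Z as the RLHF-optimal policy (Z the normalizing constant), the reward can be recovered up to an additive constant: r(y) = β·log(π(y)/π_ref(y)) + β·log Z for all y ∈ Y. Consequently, for any y⁺, y⁻: r(y⁺) − r(y⁻) = β·(log(π(y⁺)/π_ref(y⁺)) − log(π(y⁻)/π_ref(y⁻))). -/

import Mathlib

open Finset

/-- Reward recovery up to an additive constant from the RLHF-optimal policy:
`r(y) = β·log(π(y)/π_ref(y)) + β·log Z`, and hence the reward difference equals
`β` times the difference of log-ratios. -/
theorem reward_recovery (Y : Type*) [Fintype Y]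
    (πref : Y → ℝ) (hπref : ∀ y, 0 < πref y)
    (r : Y → ℝ) (β : ℝ) (hβ : 0 < β)
    (Z : ℝ) (hZ : Z = ∑ y, πref y * Real.exp (r y / β))
    (π : Y → ℝ) (hπ : ∀ y, π y = πref y * Real.exp (r y / β) / Z) :
    (∀ y, r y = β * Real.log (π y / πref y) + β * Real.log Z)
      ∧ ∀ yp ym : Y, r yp - r ym =
          β * (Real.log (π yp / πref yp) - Real.log (π ym / πref ym)) := by
  have key : ∀ y : Y, r y = β * Real.log (π y / πref y) + β * Real.log Z := by
    intro y
    have hZpos : 0 < Z := by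
      rw [hZ]
      exact Finset.sum_pos (fun i _ => mul_pos (hπref i) (Real.exp_pos _))
        ⟨y, Finset.mem_univ y⟩
    have hratio : π y / πref y = Real.exp (r y / β) / Z := by
      rw [hπ y, div_right_comm, mul_div_cancel_left₀ _ (ne_of_gt (hπref y))]
    rw [hratio, Real.log_div (Real.exp_ne_zero _) (ne_of_gt hZpos), Real.log_exp]
    field_simp
    ring
  exact ⟨key, fun yp ym => by rw [key yp, key ym]; ring⟩
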